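/- Let H and P be real numbers with 1 < H² < P, and set N = (1 − 1/H²)/(1/H² − 1/P) > 0 and L̂(η) = 1 − 1/P + (1 − 1/H²)·sinh²η. Define, for η ∈ (0,∞) with x = cosh η, Y₁(η) = [((1 − Nx + √(N+1)·√(1+Nx²))·(x − 1)) / ((1 + Nx + √(N+1)·√(1+Nx²))·(x + 1))]^{−(1/2)√(1 − 1/P)}. Then Y₁ is positive and differentiable on (0,∞) and satisfies (log Y₁)'(η) = (1/P − 1)/(sinh η·√(L̂(η))) for all η ∈ (0,∞). -/

import Mathlib

open Real Set

lemma aux_key (N : ℝ) (hN0 : 0 < N) (η : ℝ) (hη0 : 0 < η) :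
    0 < ((1 - N * Real.cosh η + Real.sqrt (N + 1) * Real.sqrt (1 + N * Real.cosh η ^ 2))
          * (Real.cosh η - 1)) /
        ((1 + N * Real.cosh η + Real.sqrt (N + 1) * Real.sqrt (1 + N * Real.cosh η ^ 2))
          * (Real.cosh η + 1)) ∧
    ∃ d, HasDerivAt (fun y =>
        ((1 - N * Real.cosh y + Real.sqrt (N + 1) * Real.sqrt (1 + N * Real.cosh y ^ 2))
          * (Real.cosh y - 1)) /
        ((1 + N * Real.cosh y + Real.sqrt (N + 1) * Real.sqrt (1 + N * Real.cosh y ^ 2))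
          * (Real.cosh y + 1))) d η ∧
      d / (((1 - N * Real.cosh η + Real.sqrt (N + 1) * Real.sqrt (1 + N * Real.cosh η ^ 2))
          * (Real.cosh η - 1)) /
        ((1 + N * Real.cosh η + Real.sqrt (N + 1) * Real.sqrt (1 + N * Real.cosh η ^ 2))
          * (Real.cosh η + 1)))
        = 2 * Real.sqrt (N + 1) / (Real.sqrt (1 + N * Real.cosh η ^ 2) * Real.sinh η) := by
  have hx1 : 1 < Real.cosh η := Real.one_lt_cosh.mpr (ne_of_gt hη0)
  have hsh0 : 0 < Real.sinh η := Real.sinh_pos_iff.mpr hη0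
  set x := Real.cosh η with hxdef
  set sh := Real.sinh η with hshdef
  have hxsq : x ^ 2 = sh ^ 2 + 1 := Real.cosh_sq η
  have hs0 : 0 < Real.sqrt (N + 1) := Real.sqrt_pos.mpr (by linarith)
  have hs2 : Real.sqrt (N + 1) ^ 2 = N + 1 := Real.sq_sqrt (by linarith)
  set s := Real.sqrt (N + 1) with hsdef
  have htpos : 0 < 1 + N * x ^ 2 := by positivity
  have ht0 : 0 < Real.sqrt (1 + N * x ^ 2) := Real.sqrt_pos.mpr htpos
  have ht2 : Real.sqrt (1 + N * x ^ 2) ^ 2 = 1 + N * x ^ 2 := Real.sq_sqrt htpos.le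
  set t := Real.sqrt (1 + N * x ^ 2) with htdef
  have hA : 0 < 1 - N * x + s * t := by
    nlinarith [mul_pos hs0 ht0, hs2, ht2, sq_nonneg (s * t + (N * x - 1))]
  have hB : 0 < 1 + N * x + s * t := by
    have := mul_pos hs0 ht0
    nlinarith
  have hnum : 0 < (1 - N * x + s * t) * (x - 1) := mul_pos hA (by linarith)
  have hden : 0 < (1 + N * x + s * t) * (x + 1) := mul_pos hB (by linarith)
  refine ⟨div_pos hnum hden, ?_⟩
  have hc : HasDerivAt Real.cosh sh η := Real.hasDerivAt_cosh η
  have hq : HasDerivAt (fun y => 1 + N * Real.cosh y ^ 2) (N * (2 * x ^ 1 * sh)) η :=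
    ((hc.pow 2).const_mul N).const_add 1
  have hts : HasDerivAt (fun y => Real.sqrt (1 + N * Real.cosh y ^ 2))
      (N * (2 * x ^ 1 * sh) / (2 * t)) η := hq.sqrt (ne_of_gt htpos)
  have hnum' : HasDerivAt (fun y =>
      (1 - N * Real.cosh y + s * Real.sqrt (1 + N * Real.cosh y ^ 2)) * (Real.cosh y - 1))
      ((-(N * sh) + s * (N * (2 * x ^ 1 * sh) / (2 * t))) * (x - 1)
        + (1 - N * x + s * t) * sh) η :=
    (((hc.const_mul N).const_sub 1).add (hts.const_mul s)).mul (hc.sub_const 1)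
  have hden' : HasDerivAt (fun y =>
      (1 + N * Real.cosh y + s * Real.sqrt (1 + N * Real.cosh y ^ 2)) * (Real.cosh y + 1))
      ((N * sh + s * (N * (2 * x ^ 1 * sh) / (2 * t))) * (x + 1)
        + (1 + N * x + s * t) * sh) η :=
    (((hc.const_mul N).const_add 1).add (hts.const_mul s)).mul (hc.add_const 1)
  refine ⟨_, hnum'.div hden' (ne_of_gt hden), ?_⟩
  rw [← hxdef, ← htdef]
  have hx1' : x - 1 ≠ 0 := by linarith
  have hx1'' : x + 1 ≠ 0 := by linarith
  field_simp
  have hAB : (1 - N * x + s * t) * (1 + N * x + s * t) = (2 + N + N * x ^ 2) + 2 * s * t := by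
    linear_combination t ^ 2 * hs2 + (N + 1) * ht2
  linear_combination sh ^ 2 * (2 * (t - s) * hAB + s * (4 - 2 * N * (x ^ 2 - 1)) * ht2 - 4 * t * hs2) - 2 * s * (1 - N * x + s * t) * (1 + N * x + s * t) * hxsq

theorem stmt_9
    (H P : ℝ) (hH : 1 < H ^ 2) (hHP : H ^ 2 < P)
    (N : ℝ) (hN : N = (1 - 1 / H ^ 2) / (1 / H ^ 2 - 1 / P))
    (Lhat : ℝ → ℝ)
    (hLhat : ∀ η : ℝ, Lhat η = 1 - 1 / P + (1 - 1 / H ^ 2) * (Real.sinh η) ^ 2)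
    (Y₁ : ℝ → ℝ)
    (hY₁ : ∀ η ∈ Ioi (0:ℝ),
      Y₁ η =
        (((1 - N * Real.cosh η
            + Real.sqrt (N + 1) * Real.sqrt (1 + N * (Real.cosh η) ^ 2))
              * (Real.cosh η - 1))
          / ((1 + N * Real.cosh η
            + Real.sqrt (N + 1) * Real.sqrt (1 + N * (Real.cosh η) ^ 2))
              * (Real.cosh η + 1)))
        ^ (-(1 / 2) * Real.sqrt (1 - 1 / P))) :
    0 < N ∧
    (∀ η ∈ Ioi (0:ℝ), 0 < Y₁ η) ∧
    (∀ η ∈ Ioi (0:ℝ), DifferentiableAt ℝ Y₁ η) ∧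
    (∀ η ∈ Ioi (0:ℝ),
      deriv (fun x => Real.log (Y₁ x)) η
        = (1 / P - 1) / (Real.sinh η * Real.sqrt (Lhat η))) := by
  have hH2 : (0:ℝ) < H ^ 2 := lt_trans one_pos hH
  have hP0 : (0:ℝ) < P := lt_trans (lt_trans one_pos hH) hHP
  have ha : 0 < 1 - 1 / H ^ 2 := by
    have h1 : 1 / H ^ 2 < 1 := by rw [div_lt_one hH2]; exact hH
    linarith
  have hb : 0 < 1 / H ^ 2 - 1 / P := by
    have h1 : 1 / P < 1 / H ^ 2 := one_div_lt_one_div_of_lt hH2 hHP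
    linarith
  have hN0 : 0 < N := hN ▸ div_pos ha hb
  have hNb : N * (1 / H ^ 2 - 1 / P) = 1 - 1 / H ^ 2 := by
    rw [hN]; exact div_mul_cancel₀ _ (ne_of_gt hb)
  have hP1 : 1 - 1 / P = (N + 1) * (1 / H ^ 2 - 1 / P) := by
    rw [add_mul, hNb, one_mul]; ring
  have hsr : Real.sqrt (1 - 1 / P) = Real.sqrt (N + 1) * Real.sqrt (1 / H ^ 2 - 1 / P) := by
    rw [hP1, Real.sqrt_mul (by linarith)]
  have hLt : ∀ η : ℝ, Lhat η = (1 / H ^ 2 - 1 / P) * (1 + N * Real.cosh η ^ 2) := by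
    intro η
    have hc := Real.cosh_sq η
    rw [hLhat]
    linear_combination (-(Real.cosh η ^ 2)) * hNb + (-(1 - 1 / H ^ 2)) * hc
  have hLs : ∀ η : ℝ, Real.sqrt (Lhat η)
      = Real.sqrt (1 / H ^ 2 - 1 / P) * Real.sqrt (1 + N * Real.cosh η ^ 2) := by
    intro η
    rw [hLt η, Real.sqrt_mul hb.le]
  refine ⟨hN0, ?_, ?_, ?_⟩
  · intro η hη
    rw [hY₁ η hη]
    exact Real.rpow_pos_of_pos (aux_key N hN0 η hη).1 _
  · intro η hη
    obtain ⟨hGpos, d, hd, -⟩ := aux_key N hN0 η hη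
    have hdiff : DifferentiableAt ℝ (fun y =>
        (((1 - N * Real.cosh y + Real.sqrt (N + 1) * Real.sqrt (1 + N * Real.cosh y ^ 2))
            * (Real.cosh y - 1)) /
          ((1 + N * Real.cosh y + Real.sqrt (N + 1) * Real.sqrt (1 + N * Real.cosh y ^ 2))
            * (Real.cosh y + 1))) ^ (-(1 / 2) * Real.sqrt (1 - 1 / P))) η :=
      (hd.rpow_const (Or.inl (ne_of_gt hGpos))).differentiableAt
    have hev : Y₁ =ᶠ[nhds η] fun y =>
        (((1 - N * Real.cosh y + Real.sqrt (N + 1) * Real.sqrt (1 + N * Real.cosh y ^ 2))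
            * (Real.cosh y - 1)) /
          ((1 + N * Real.cosh y + Real.sqrt (N + 1) * Real.sqrt (1 + N * Real.cosh y ^ 2))
            * (Real.cosh y + 1))) ^ (-(1 / 2) * Real.sqrt (1 - 1 / P)) := by
      filter_upwards [isOpen_Ioi.mem_nhds hη] with y hy
      exact hY₁ y hy
    exact hdiff.congr_of_eventuallyEq hev
  · intro η hη
    obtain ⟨hGpos, d, hd, hdval⟩ := aux_key N hN0 η hη
    have hη0 : 0 < η := hη
    have hev : (fun y => Real.log (Y₁ y)) =ᶠ[nhds η] fun y =>
        (-(1 / 2) * Real.sqrt (1 - 1 / P)) * Real.log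
        (((1 - N * Real.cosh y + Real.sqrt (N + 1) * Real.sqrt (1 + N * Real.cosh y ^ 2))
            * (Real.cosh y - 1)) /
          ((1 + N * Real.cosh y + Real.sqrt (N + 1) * Real.sqrt (1 + N * Real.cosh y ^ 2))
            * (Real.cosh y + 1))) := by
      filter_upwards [isOpen_Ioi.mem_nhds hη] with y hy
      rw [hY₁ y hy, Real.log_rpow (aux_key N hN0 y hy).1]
    rw [hev.deriv_eq]
    have hlog := (hd.log (ne_of_gt hGpos)).const_mul (-(1 / 2) * Real.sqrt (1 - 1 / P))
    rw [hlog.deriv, hdval, hsr, hLs η]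
    have h1P : 1 / P - 1 = -((N + 1) * (1 / H ^ 2 - 1 / P)) := by linarith
    rw [h1P]
    have hr2 : Real.sqrt (1 / H ^ 2 - 1 / P) ^ 2 = 1 / H ^ 2 - 1 / P := Real.sq_sqrt hb.le
    have hs2 : Real.sqrt (N + 1) ^ 2 = N + 1 := Real.sq_sqrt (by linarith)
    have hr0 : 0 < Real.sqrt (1 / H ^ 2 - 1 / P) := Real.sqrt_pos.mpr hb
    have hs0 : 0 < Real.sqrt (N + 1) := Real.sqrt_pos.mpr (by linarith)
    have htpos : 0 < 1 + N * Real.cosh η ^ 2 := by positivity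
    have ht0 : 0 < Real.sqrt (1 + N * Real.cosh η ^ 2) := Real.sqrt_pos.mpr htpos
    have hsh0 : 0 < Real.sinh η := Real.sinh_pos_iff.mpr hη0
    generalize Real.sqrt (1 / H ^ 2 - 1 / P) = r at hr2 hr0 ⊢
    generalize Real.sqrt (N + 1) = s' at hs2 hs0 ⊢
    generalize Real.sqrt (1 + N * Real.cosh η ^ 2) = t' at ht0 ⊢
    rw [← hr2, ← hs2]
    field_simp
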